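/- Let S be a finite set and let 𝒜, ℬ be two distinct nondegenerate hierarchies over S. Then 𝒜 and ℬ are NNI-adjacent (one is obtained from the other by a single NNI move) if and only if d_CM(𝒜,ℬ) = 1, i.e., if and only if there is exactly one pair (I,J) with I ∈ 𝒜 and J ∈ ℬ such that I and J are incompatible. -/

import Mathlib

open scoped Classical

namespace TreeDist

variable {α : Type*} [DecidableEq α]

/-- Two finite sets are compatible if they are disjoint or nested. -/
def Compatible (A B : Finset α) : Prop :=
  A ∩ B = ∅ ∨ A ⊆ B ∨ B ⊆ A

/-- A hierarchy over `S`: a laminar family of nonempty subsets of `S`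
containing `S` and all singletons. -/
def IsHierarchy (S : Finset α) (F : Finset (Finset α)) : Prop :=
  (∀ A ∈ F, A ⊆ S ∧ A.Nonempty) ∧
  (∀ A ∈ F, ∀ B ∈ F, Compatible A B) ∧
  S ∈ F ∧ ∀ i ∈ S, ({i} : Finset α) ∈ F

/-- A nondegenerate (binary) hierarchy: a hierarchy with `2|S| - 1` clusters,
equivalently a maximal laminar family. -/
def Nondeg (S : Finset α) (F : Finset (Finset α)) : Prop :=
  IsHierarchy S F ∧ F.card = 2 * S.card - 1

/-- `P` is the parent of `I` in the family `F`: the smallest cluster of `F`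
strictly containing `I`. -/
def IsParent (F : Finset (Finset α)) (I P : Finset α) : Prop :=
  P ∈ F ∧ I ⊂ P ∧ ∀ Q ∈ F, I ⊂ Q → P ⊆ Q

/-- `G` is the result of an NNI move on `F` at some grandchild `C`:
`G = (F \ {parent C}) ∪ {grandparent C \ C}`. -/
def IsNNIMove (F G : Finset (Finset α)) : Prop :=
  ∃ C P GP, C ∈ F ∧ IsParent F C P ∧ IsParent F P GP ∧
    G = insert (GP \ C) (F.erase P)

/-- Restriction of a family of sets to `K`: `{A ∩ K : A ∈ F, A ∩ K ≠ ∅}`. -/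
noncomputable def restrictFam (F : Finset (Finset α)) (K : Finset α) : Finset (Finset α) :=
  (F.image (· ∩ K)).filter fun A => A.Nonempty

/-- The cardinality of the smallest common ancestor of `i` and `j` in `F`, i.e. the
minimum cardinality of a cluster of `F` containing both `i` and `j`. -/
noncomputable def caCard (F : Finset (Finset α)) (i j : α) : ℕ :=
  sInf {n | ∃ A ∈ F, i ∈ A ∧ j ∈ A ∧ A.card = n}

/-- Ultrametric representation `U(F)_{ij} = |ca(i,j)| - 1`. -/
noncomputable def Umat (F : Finset (Finset α)) (i j : α) : ℤ :=
  (caCard F i j : ℤ) - 1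

/-- Cluster-cardinality distance `d_CC = (1/2) Σ_{i,j ∈ S} |U(F)_{ij} - U(G)_{ij}|`. -/
noncomputable def dCC (S : Finset α) (F G : Finset (Finset α)) : ℚ :=
  (1 / 2) * ∑ i ∈ S, ∑ j ∈ S, |((Umat F i j : ℚ)) - ((Umat G i j : ℚ))|

/-- Robinson–Foulds distance: half the size of the symmetric difference of cluster sets. -/
noncomputable def dRF (F G : Finset (Finset α)) : ℚ :=
  (((F \ G) ∪ (G \ F)).card : ℚ) / 2

/-- Crossing dissimilarity: the number of incompatible pairs of clusters. -/
noncomputable def dCM (F G : Finset (Finset α)) : ℕ :=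
  ((F ×ˢ G).filter fun p => ¬ Compatible p.1 p.2).card

/-- Depth of a cluster: the number of its strict ancestors in `F`. -/
noncomputable def depth (F : Finset (Finset α)) (I : Finset α) : ℕ :=
  (F.filter fun J => I ⊂ J).card

/-- The children of `I` in `F`: the clusters of `F` whose parent is `I`. -/
noncomputable def children (F : Finset (Finset α)) (I : Finset α) : Finset (Finset α) :=
  F.filter fun C => IsParent F C I

/-- `η_{F,G}(I,J)`: the number of members of `(children I)|_J` incompatible with
the family `(children J)|_I`. -/
noncomputable def eta (F G : Finset (Finset α)) (I J : Finset α) : ℕ :=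
  ((restrictFam (children F I) J).filter
    fun A => ∃ B ∈ restrictFam (children G J) I, ¬ Compatible A B).card

/-- `θ(x) = (x² + x)/2`. -/
def theta (x : ℕ) : ℚ := ((x : ℚ) ^ 2 + x) / 2

/-- Closed-form NNI navigation distance `d_Nav(F,G) = Σ_{I∈F, J∈G} θ(η_{F,G}(I,J))`. -/
noncomputable def dNav (F G : Finset (Finset α)) : ℚ :=
  ∑ I ∈ F, ∑ J ∈ G, theta (eta F G I J)


lemma Compatible.symm {A B : Finset α} (h : Compatible A B) : Compatible B A := by
  rcases h with h | h | h
  · exact Or.inl (by rwa [Finset.inter_comm])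
  · exact Or.inr (Or.inr h)
  · exact Or.inr (Or.inl h)

lemma not_compatible_iff {A B : Finset α} :
    ¬ Compatible A B ↔ (A ∩ B).Nonempty ∧ ¬ A ⊆ B ∧ ¬ B ⊆ A := by
  unfold Compatible
  push_neg
  exact Iff.rfl

/-- `M` is a maximal member of the family `F`. -/
def IsMaxIn (F : Finset (Finset α)) (M : Finset α) : Prop :=
  M ∈ F ∧ ∀ B ∈ F, ¬ M ⊂ B

lemma exists_max_above (F : Finset (Finset α)) {A : Finset α} (hA : A ∈ F) :
    ∃ M, IsMaxIn F M ∧ A ⊆ M := by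
  obtain ⟨M, hM, hmax⟩ : ∃ m ∈ F.filter (A ⊆ ·), ∀ x ∈ F.filter (A ⊆ ·), ¬ m < x := by
    obtain ⟨m, hm⟩ := Finset.exists_maximal (s := F.filter (A ⊆ ·)) ⟨A, by simp [hA]⟩
    exact ⟨m, hm.1, fun x hx hlt => hlt.not_ge (hm.2 hx hlt.le)⟩
  rw [Finset.mem_filter] at hM
  refine ⟨M, ⟨hM.1, ?_⟩, hM.2⟩
  intro B hB hMB
  exact hmax B (Finset.mem_filter.2 ⟨hB, hM.2.trans hMB.subset⟩) hMB

lemma max_inter_empty {F : Finset (Finset α)}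
    (hlam : ∀ A ∈ F, ∀ B ∈ F, Compatible A B) {M M' : Finset α}
    (hM : IsMaxIn F M) (hM' : IsMaxIn F M') (hne : M ≠ M') : M ∩ M' = ∅ := by
  rcases hlam M hM.1 M' hM'.1 with h | h | h
  · exact h
  · exact absurd (HasSubset.Subset.ssubset_of_ne h hne) (by exact fun hc => hM.2 M' hM'.1 hc)
  · exact absurd (HasSubset.Subset.ssubset_of_ne h hne.symm) (fun hc => hM'.2 M hM.1 hc)

lemma sum_arg (F : Finset (Finset α))
    (hA : ∀ A ∈ F, A.Nonempty) (hlam : ∀ A ∈ F, ∀ B ∈ F, Compatible A B)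
    (IH : ∀ F' : Finset (Finset α), F' ⊂ F → (∀ A ∈ F', A.Nonempty) →
      (∀ A ∈ F', ∀ B ∈ F', Compatible A B) → F'.Nonempty →
      F'.card + 1 ≤ 2 * (F'.sup id).card)
    {M M' : Finset α} (hM : IsMaxIn F M) (hM' : IsMaxIn F M') (hne : M ≠ M') :
    F.card + 2 ≤ 2 * (F.sup id).card := by
  classical
  set T : Finset (Finset α) := F.filter (fun A => ∀ B ∈ F, ¬ A ⊂ B) with hT
  have hmemT : ∀ {N : Finset α}, N ∈ T ↔ IsMaxIn F N := by
    intro N; simp [hT, IsMaxIn, Finset.mem_filter]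
  -- pieces
  set piece : Finset α → Finset (Finset α) := fun N => F.filter (· ⊆ N) with hpiece
  have hdisj : ∀ N ∈ T, ∀ N' ∈ T, N ≠ N' → Disjoint (piece N) (piece N') := by
    intro N hN N' hN' hNN'
    rw [Finset.disjoint_left]
    intro A hA1 hA2
    rw [hpiece] at hA1 hA2
    simp only [Finset.mem_filter] at hA1 hA2
    have hsub : A ⊆ N ∩ N' := Finset.subset_inter hA1.2 hA2.2
    rw [max_inter_empty hlam (hmemT.1 hN) (hmemT.1 hN') hNN'] at hsub
    exact Finset.Nonempty.ne_empty (hA A hA1.1) (Finset.subset_empty.1 hsub)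
  have hcover : F = T.biUnion piece := by
    ext A
    constructor
    · intro hAF
      obtain ⟨N, hNmax, hAN⟩ := exists_max_above F hAF
      exact Finset.mem_biUnion.2 ⟨N, hmemT.2 hNmax, Finset.mem_filter.2 ⟨hAF, hAN⟩⟩
    · intro h
      obtain ⟨N, _, hA2⟩ := Finset.mem_biUnion.1 h
      exact (Finset.mem_filter.1 hA2).1
  have hcard : F.card = ∑ N ∈ T, (piece N).card := by
    rw [hcover, Finset.card_biUnion hdisj]
  have hMT : M ∈ T := hmemT.2 hM
  have hM'T : M' ∈ T := hmemT.2 hM'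
  have hTtwo : 2 ≤ T.card := Finset.one_lt_card.2 ⟨M, hMT, M', hM'T, hne⟩
  -- each piece bound
  have hpieceb : ∀ N ∈ T, (piece N).card + 1 ≤ 2 * N.card := by
    intro N hN
    have hNmax := hmemT.1 hN
    have hNpiece : N ∈ piece N := Finset.mem_filter.2 ⟨hNmax.1, Finset.Subset.refl N⟩
    have hsup : (piece N).sup id = N := by
      apply le_antisymm
      · exact Finset.sup_le (fun B hB => (Finset.mem_filter.1 hB).2)
      · exact Finset.le_sup (f := id) hNpiece
    have hss : piece N ⊂ F := by
      rw [Finset.ssubset_iff_of_subset (Finset.filter_subset _ _)]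
      rcases eq_or_ne N M with rfl | hNM
      · refine ⟨M', hM'.1, ?_⟩
        intro hc
        have := (Finset.mem_filter.1 hc).2
        have hie := max_inter_empty hlam hM' hNmax (Ne.symm hne)
        rw [Finset.inter_eq_left.2 this] at hie
        exact Finset.Nonempty.ne_empty (hA M' hM'.1) hie
      · refine ⟨M, hM.1, ?_⟩
        intro hc
        have := (Finset.mem_filter.1 hc).2
        have hie := max_inter_empty hlam hM hNmax (Ne.symm hNM)
        rw [Finset.inter_eq_left.2 this] at hie
        exact Finset.Nonempty.ne_empty (hA M hM.1) hie
    have := IH (piece N) hss (fun A hA' => hA A (Finset.mem_filter.1 hA').1)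
      (fun A hA' B hB' => hlam A (Finset.mem_filter.1 hA').1 B (Finset.mem_filter.1 hB').1)
      ⟨N, hNpiece⟩
    rwa [hsup] at this
  -- sum the bounds
  have hsum : F.card + T.card ≤ 2 * ∑ N ∈ T, N.card := by
    have h1 : F.card + T.card = ∑ N ∈ T, ((piece N).card + 1) := by
      rw [hcard, Finset.sum_add_distrib, Finset.sum_const, smul_eq_mul, mul_one]
    rw [h1, Finset.mul_sum]
    exact Finset.sum_le_sum hpieceb
  -- total of maximal sets
  have hdisj2 : ∀ N ∈ T, ∀ N' ∈ T, N ≠ N' → Disjoint (id N) (id N') := by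
    intro N hN N' hN' hNN'
    exact Finset.disjoint_iff_inter_eq_empty.2
      (max_inter_empty hlam (hmemT.1 hN) (hmemT.1 hN') hNN')
  have hsum2 : ∑ N ∈ T, N.card ≤ (F.sup id).card := by
    have : T.biUnion id ⊆ F.sup id := by
      intro x hx
      obtain ⟨N, hN, hxN⟩ := Finset.mem_biUnion.1 hx
      exact Finset.le_sup (f := id) (hmemT.1 hN).1 hxN
    calc ∑ N ∈ T, N.card = (T.biUnion id).card := (Finset.card_biUnion hdisj2).symm
      _ ≤ (F.sup id).card := Finset.card_le_card this
  omega

lemma unique_max (F : Finset (Finset α)) (hne : F.Nonempty)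
    (huniq : ¬ ∃ M M', IsMaxIn F M ∧ IsMaxIn F M' ∧ M ≠ M') :
    ∃ M, M ∈ F ∧ ∀ A ∈ F, A ⊆ M := by
  obtain ⟨A0, hA0⟩ := hne
  obtain ⟨M, hM, _⟩ := exists_max_above F hA0
  refine ⟨M, hM.1, fun A hAF => ?_⟩
  obtain ⟨N, hN, hAN⟩ := exists_max_above F hAF
  rcases eq_or_ne N M with rfl | hNM
  · exact hAN
  · exact absurd ⟨N, M, hN, hM, hNM⟩ huniq

lemma laminar_bound (F : Finset (Finset α)) :
    (∀ A ∈ F, A.Nonempty) → (∀ A ∈ F, ∀ B ∈ F, Compatible A B) → F.Nonempty →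
    F.card + 1 ≤ 2 * (F.sup id).card := by
  induction F using Finset.strongInductionOn with
  | _ F IH =>
    intro hA hlam hne
    by_cases htwo : ∃ M M', IsMaxIn F M ∧ IsMaxIn F M' ∧ M ≠ M'
    · obtain ⟨M, M', hM, hM', hMM'⟩ := htwo
      have := sum_arg F hA hlam (fun F' h h1 h2 h3 => IH F' h h1 h2 h3) hM hM' hMM'
      omega
    · obtain ⟨M, hMF, hMub⟩ := unique_max F hne htwo
      have hsup : F.sup id = M :=
        le_antisymm (Finset.sup_le hMub) (Finset.le_sup (f := id) hMF)
      rw [hsup]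
      set F' := F.erase M with hF'def
      have hsub' : F' ⊂ F := Finset.erase_ssubset hMF
      have hA' : ∀ A ∈ F', A.Nonempty := fun A h => hA A (Finset.mem_of_mem_erase h)
      have hlam' : ∀ A ∈ F', ∀ B ∈ F', Compatible A B := fun A h B h' =>
        hlam A (Finset.mem_of_mem_erase h) B (Finset.mem_of_mem_erase h')
      have hcard : F'.card + 1 = F.card := Finset.card_erase_add_one hMF
      have hMne : M.Nonempty := hA M hMF
      have hMcard : 1 ≤ M.card := Finset.card_pos.2 hMne
      rcases Finset.eq_empty_or_nonempty F' with hF'e | hne'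
      · have h0 : F'.card = 0 := by rw [hF'e]; rfl
        omega
      · have hsupsub : F'.sup id ⊆ M :=
          Finset.sup_le (fun B hB => hMub B (Finset.mem_of_mem_erase hB))
        by_cases htwo' : ∃ N N', IsMaxIn F' N ∧ IsMaxIn F' N' ∧ N ≠ N'
        · obtain ⟨N, N', hN, hN', hNN'⟩ := htwo'
          have hb := sum_arg F' hA' hlam'
            (fun F'' h h1 h2 h3 => IH F'' (h.trans hsub') h1 h2 h3) hN hN' hNN'
          have : (F'.sup id).card ≤ M.card := Finset.card_le_card hsupsub
          omega
        · obtain ⟨N, hNF', hNub⟩ := unique_max F' hne' htwo'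
          have hsup' : F'.sup id = N :=
            le_antisymm (Finset.sup_le hNub) (Finset.le_sup (f := id) hNF')
          have hNM : N ⊂ M := by
            refine ⟨hMub N (Finset.mem_of_mem_erase hNF'), fun h => ?_⟩
            exact (Finset.mem_erase.1 hNF').1 (le_antisymm (hMub N (Finset.mem_of_mem_erase hNF')) h)
          have hcardN : N.card < M.card := Finset.card_lt_card hNM
          have := IH F' hsub' hA' hlam' hne'
          rw [hsup'] at this
          omega


/-- A nonempty subset of `S` compatible with every member of a nondegenerate
hierarchy on `S` is itself a member (maximality of nondegenerate hierarchies). -/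
lemma mem_of_forall_compatible {S : Finset α} {F : Finset (Finset α)} (hF : Nondeg S F)
    {A : Finset α} (hAS : A ⊆ S) (hAne : A.Nonempty) (hcomp : ∀ B ∈ F, Compatible A B) :
    A ∈ F := by
  by_contra hnot
  obtain ⟨a, ha⟩ := hAne
  have hScard : 1 ≤ S.card := Finset.card_pos.2 ⟨a, hAS ha⟩
  set F' := insert A F with hF'
  have hcard : F'.card = F.card + 1 := Finset.card_insert_of_notMem hnot
  have hmem : ∀ B ∈ F', B.Nonempty := by
    intro B hB
    rcases Finset.mem_insert.1 hB with rfl | hB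
    · exact ⟨a, ha⟩
    · exact (hF.1.1 B hB).2
  have hsubS : ∀ B ∈ F', B ⊆ S := by
    intro B hB
    rcases Finset.mem_insert.1 hB with rfl | hB
    · exact hAS
    · exact (hF.1.1 B hB).1
  have hlam' : ∀ B ∈ F', ∀ C ∈ F', Compatible B C := by
    intro B hB C hC
    rcases Finset.mem_insert.1 hB with rfl | hBF
    · rcases Finset.mem_insert.1 hC with rfl | hCF2
      · exact Or.inr (Or.inl (Finset.Subset.refl _))
      · exact hcomp C hCF2
    · rcases Finset.mem_insert.1 hC with rfl | hCF2
      · exact (hcomp B hBF).symm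
      · exact hF.1.2.1 B hBF C hCF2
  have hb := laminar_bound F' hmem hlam' ⟨A, Finset.mem_insert_self _ _⟩
  have hsup : F'.sup id ⊆ S := Finset.sup_le hsubS
  have hle := Finset.card_le_card hsup
  have hFc := hF.2
  omega

/-- Forward direction: an NNI move produces exactly one incompatible pair. -/
lemma dCM_of_move {S : Finset α} {F G : Finset (Finset α)} (hF : IsHierarchy S F)
    (h : IsNNIMove F G) : dCM F G = 1 := by
  obtain ⟨C, P, GP, hCF, ⟨hPF, hCP, hPmin⟩, ⟨hGPF, hPGP, hGPmin⟩, hGdef⟩ := h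
  have hlam := hF.2.1
  have hCne : C.Nonempty := (hF.1 C hCF).2
  obtain ⟨y, hyP, hyC⟩ := Finset.exists_of_ssubset hCP
  obtain ⟨z, hzGP, hzP⟩ := Finset.exists_of_ssubset hPGP
  have hCPs : C ⊆ P := hCP.subset
  have hPGPs : P ⊆ GP := hPGP.subset
  have hQ : ¬ Compatible P (GP \ C) := by
    rw [not_compatible_iff]
    refine ⟨⟨y, Finset.mem_inter.2 ⟨hyP, Finset.mem_sdiff.2 ⟨hPGPs hyP, hyC⟩⟩⟩, ?_, ?_⟩
    · intro hsub
      obtain ⟨c, hc⟩ := hCne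
      exact (Finset.mem_sdiff.1 (hsub (hCPs hc))).2 hc
    · intro hsub
      exact hzP (hsub (Finset.mem_sdiff.2 ⟨hzGP, fun hzC => hzP (hCPs hzC)⟩))
  have key : ∀ I ∈ F, ¬ Compatible I (GP \ C) → I = P := by
    intro I hIF hinc
    rcases hlam I hIF GP hGPF with h1 | h1 | h1
    · exfalso; apply hinc; left
      have hss : I ∩ (GP \ C) ⊆ I ∩ GP := Finset.inter_subset_inter (Finset.Subset.refl _) Finset.sdiff_subset
      rw [h1] at hss
      exact Finset.subset_empty.1 hss
    · -- I ⊆ GP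
      rcases hlam I hIF P hPF with h2 | h2 | h2
      · -- I ∩ P = ∅
        exfalso; apply hinc; right; left
        intro x hx
        refine Finset.mem_sdiff.2 ⟨h1 hx, fun hxC => ?_⟩
        have hxm : x ∈ I ∩ P := Finset.mem_inter.2 ⟨hx, hCPs hxC⟩
        rw [h2] at hxm; exact absurd hxm (Finset.notMem_empty x)
      · -- I ⊆ P
        rcases hlam I hIF C hCF with h3 | h3 | h3
        · exfalso; apply hinc; right; left
          intro x hx
          refine Finset.mem_sdiff.2 ⟨h1 hx, fun hxC => ?_⟩
          have hxm : x ∈ I ∩ C := Finset.mem_inter.2 ⟨hx, hxC⟩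
          rw [h3] at hxm; exact absurd hxm (Finset.notMem_empty x)
        · exfalso; apply hinc; left
          apply Finset.eq_empty_of_forall_notMem
          intro x hx
          rw [Finset.mem_inter, Finset.mem_sdiff] at hx
          exact hx.2.2 (h3 hx.1)
        · -- C ⊆ I
          rcases eq_or_ne I C with rfl | hIC
          · exfalso; apply hinc; left
            apply Finset.eq_empty_of_forall_notMem
            intro x hx
            rw [Finset.mem_inter, Finset.mem_sdiff] at hx
            exact hx.2.2 hx.1
          · exact Finset.Subset.antisymm h2
              (hPmin I hIF (HasSubset.Subset.ssubset_of_ne h3 (Ne.symm hIC)))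
      · -- P ⊆ I
        rcases eq_or_ne I P with rfl | hIP
        · rfl
        · exfalso; apply hinc; right; right
          calc GP \ C ⊆ GP := Finset.sdiff_subset
            _ ⊆ I := hGPmin I hIF (HasSubset.Subset.ssubset_of_ne h2 (Ne.symm hIP))
    · exfalso; apply hinc; right; right
      exact Finset.sdiff_subset.trans h1
  have hset : (F ×ˢ G).filter (fun p => ¬ Compatible p.1 p.2) = {(P, GP \ C)} := by
    ext ⟨I, J⟩
    simp only [Finset.mem_filter, Finset.mem_product, Finset.mem_singleton, Prod.mk.injEq]
    constructor
    · rintro ⟨⟨hI, hJ⟩, hnc⟩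
      rw [hGdef] at hJ
      rcases Finset.mem_insert.1 hJ with rfl | hJ
      · exact ⟨key I hI hnc, rfl⟩
      · exact absurd (hlam I hI J (Finset.mem_of_mem_erase hJ)) hnc
    · rintro ⟨rfl, rfl⟩
      exact ⟨⟨hPF, hGdef ▸ Finset.mem_insert_self _ _⟩, hQ⟩
  rw [dCM, hset, Finset.card_singleton]

lemma dCM_comm (F G : Finset (Finset α)) : dCM F G = dCM G F := by
  unfold dCM
  rw [← Finset.card_map ⟨Prod.swap, Prod.swap_injective⟩]
  congr 1
  ext ⟨J, I⟩
  simp only [Finset.mem_map, Finset.mem_filter, Finset.mem_product,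
    Function.Embedding.coeFn_mk, Prod.exists, Prod.swap_prod_mk, Prod.mk.injEq]
  constructor
  · rintro ⟨I', J', ⟨⟨hI, hJ⟩, hnc⟩, rfl, rfl⟩
    exact ⟨⟨hJ, hI⟩, fun hc => hnc hc.symm⟩
  · rintro ⟨⟨hJ, hI⟩, hnc⟩
    exact ⟨I, J, ⟨⟨hI, hJ⟩, fun hc => hnc hc.symm⟩, rfl, rfl⟩

/-- Backward direction. -/
lemma move_of_dCM {S : Finset α} {F G : Finset (Finset α)} (hF : Nondeg S F) (hG : Nondeg S G)
    (h1 : dCM F G = 1) : IsNNIMove F G := by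
  obtain ⟨p, hp⟩ := Finset.card_eq_one.1 h1
  obtain ⟨P, Q⟩ := p
  have hPQmem : (P, Q) ∈ (F ×ˢ G).filter (fun p => ¬ Compatible p.1 p.2) := by
    rw [hp]; exact Finset.mem_singleton_self _
  rw [Finset.mem_filter, Finset.mem_product] at hPQmem
  obtain ⟨⟨hPF, hQG⟩, hPQ⟩ := hPQmem
  have huq : ∀ I J : Finset α, I ∈ F → J ∈ G → ¬ Compatible I J → I = P ∧ J = Q := by
    intro I J hI hJ hnc
    have : (I, J) ∈ (F ×ˢ G).filter (fun p => ¬ Compatible p.1 p.2) :=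
      Finset.mem_filter.2 ⟨Finset.mem_product.2 ⟨hI, hJ⟩, hnc⟩
    rw [hp, Finset.mem_singleton, Prod.mk.injEq] at this
    exact this
  obtain ⟨⟨m, hm⟩, hnPQ, hnQP⟩ := not_compatible_iff.1 hPQ
  rw [Finset.mem_inter] at hm
  obtain ⟨x, hxP, hxQ⟩ := Finset.not_subset.1 hnPQ
  obtain ⟨d, hdQ, hdP⟩ := Finset.not_subset.1 hnQP
  have hlamF := hF.1.2.1
  have hlamG := hG.1.2.1
  have hPS : P ⊆ S := (hF.1.1 P hPF).1
  have hQS : Q ⊆ S := (hG.1.1 Q hQG).1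
  have hQnF : Q ∉ F := fun h => hPQ (hlamF P hPF Q h)
  have hPnG : P ∉ G := fun h => hPQ (hlamG P h Q hQG)
  have hcompF : ∀ A ∈ F, A ≠ P → ∀ B ∈ G, Compatible A B := by
    intro A hA hAP B hB
    by_contra hnc
    exact hAP (huq A B hA hB hnc).1
  have hcompG : ∀ B ∈ G, B ≠ Q → ∀ A ∈ F, Compatible B A := by
    intro B hB hBQ A hA
    by_contra hnc
    exact hBQ (huq A B hA hB (fun hc => hnc hc.symm)).2
  have hEsub : F.erase P ⊆ G.erase Q := by
    intro A hA
    have hAF := Finset.mem_of_mem_erase hA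
    have hAP := (Finset.mem_erase.1 hA).1
    have hAG : A ∈ G := mem_of_forall_compatible hG (hF.1.1 A hAF).1 (hF.1.1 A hAF).2
      (fun B hB => hcompF A hAF hAP B hB)
    exact Finset.mem_erase.2 ⟨fun h => hQnF (h ▸ hAF), hAG⟩
  have hEsub' : G.erase Q ⊆ F.erase P := by
    intro B hB
    have hBG := Finset.mem_of_mem_erase hB
    have hBQ := (Finset.mem_erase.1 hB).1
    have hBF : B ∈ F := mem_of_forall_compatible hF (hG.1.1 B hBG).1 (hG.1.1 B hBG).2
      (fun A hA => hcompG B hBG hBQ A hA)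
    exact Finset.mem_erase.2 ⟨fun h => hPnG (h ▸ hBG), hBF⟩
  have hE : F.erase P = G.erase Q := Finset.Subset.antisymm hEsub hEsub'
  have hGdef : G = insert Q (F.erase P) := by
    rw [hE]; exact (Finset.insert_erase hQG).symm
  -- the grandchild C = P \ Q
  have hCne : (P \ Q).Nonempty := ⟨x, Finset.mem_sdiff.2 ⟨hxP, hxQ⟩⟩
  have hCF : P \ Q ∈ F := by
    apply mem_of_forall_compatible hF (Finset.sdiff_subset.trans hPS) hCne
    intro B hB
    rcases eq_or_ne B P with rfl | hBP
    · exact Or.inr (Or.inl Finset.sdiff_subset)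
    · have hBQc := hcompF B hB hBP Q hQG
      rcases hlamF B hB P hPF with h1 | h1 | h1
      · left
        apply Finset.eq_empty_of_forall_notMem
        intro t ht
        rw [Finset.mem_inter, Finset.mem_sdiff] at ht
        have : t ∈ B ∩ P := Finset.mem_inter.2 ⟨ht.2, ht.1.1⟩
        rw [h1] at this; exact absurd this (Finset.notMem_empty t)
      · rcases hBQc with h2 | h2 | h2
        · right; right
          intro t ht
          refine Finset.mem_sdiff.2 ⟨h1 ht, fun htQ => ?_⟩
          have : t ∈ B ∩ Q := Finset.mem_inter.2 ⟨ht, htQ⟩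
          rw [h2] at this; exact absurd this (Finset.notMem_empty t)
        · left
          apply Finset.eq_empty_of_forall_notMem
          intro t ht
          rw [Finset.mem_inter, Finset.mem_sdiff] at ht
          exact ht.1.2 (h2 ht.2)
        · exact absurd (h2.trans h1) hnQP
      · exact Or.inr (Or.inl (Finset.sdiff_subset.trans h1))
  -- the grandparent R = P ∪ Q
  have hRF : P ∪ Q ∈ F := by
    apply mem_of_forall_compatible hF (Finset.union_subset hPS hQS)
      ⟨m, Finset.mem_union_left _ hm.1⟩
    intro B hB
    rcases eq_or_ne B P with rfl | hBP
    · exact Or.inr (Or.inr Finset.subset_union_left)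
    · have hBQc := hcompF B hB hBP Q hQG
      rcases hlamF B hB P hPF with h1 | h1 | h1
      · rcases hBQc with h2 | h2 | h2
        · left
          apply Finset.eq_empty_of_forall_notMem
          intro t ht
          rw [Finset.mem_inter, Finset.mem_union] at ht
          rcases ht.1 with htP | htQ
          · have : t ∈ B ∩ P := Finset.mem_inter.2 ⟨ht.2, htP⟩
            rw [h1] at this; exact absurd this (Finset.notMem_empty t)
          · have : t ∈ B ∩ Q := Finset.mem_inter.2 ⟨ht.2, htQ⟩
            rw [h2] at this; exact absurd this (Finset.notMem_empty t)
        · exact Or.inr (Or.inr (h2.trans Finset.subset_union_right))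
        · exfalso
          have : m ∈ B ∩ P := Finset.mem_inter.2 ⟨h2 hm.2, hm.1⟩
          rw [h1] at this; exact absurd this (Finset.notMem_empty m)
      · exact Or.inr (Or.inr (h1.trans Finset.subset_union_left))
      · rcases hBQc with h2 | h2 | h2
        · exfalso
          have : m ∈ B ∩ Q := Finset.mem_inter.2 ⟨h1 hm.1, hm.2⟩
          rw [h2] at this; exact absurd this (Finset.notMem_empty m)
        · exact absurd (h1.trans h2) hnPQ
        · exact Or.inr (Or.inl (Finset.union_subset h1 h2))
  -- P is the parent of C
  have hParentCP : IsParent F (P \ Q) P := by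
    refine ⟨hPF, ?_, ?_⟩
    · exact HasSubset.Subset.ssubset_of_ne Finset.sdiff_subset
        (fun h => (Finset.mem_sdiff.1 (h ▸ hm.1)).2 hm.2)
    · intro A hA hCA
      rcases eq_or_ne A P with rfl | hAP
      · exact Finset.Subset.refl _
      · have hAQc := hcompF A hA hAP Q hQG
        rcases hlamF A hA P hPF with h1 | h1 | h1
        · exfalso
          have hxA : x ∈ A := hCA.subset (Finset.mem_sdiff.2 ⟨hxP, hxQ⟩)
          have : x ∈ A ∩ P := Finset.mem_inter.2 ⟨hxA, hxP⟩
          rw [h1] at this; exact absurd this (Finset.notMem_empty x)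
        · exfalso
          rcases hAQc with h2 | h2 | h2
          · apply hCA.not_subset
            intro t ht
            refine Finset.mem_sdiff.2 ⟨h1 ht, fun htQ => ?_⟩
            have : t ∈ A ∩ Q := Finset.mem_inter.2 ⟨ht, htQ⟩
            rw [h2] at this; exact absurd this (Finset.notMem_empty t)
          · exact hxQ (h2 (hCA.subset (Finset.mem_sdiff.2 ⟨hxP, hxQ⟩)))
          · exact hnQP (h2.trans h1)
        · exact h1
  -- P ∪ Q is the parent of P
  have hParentPR : IsParent F P (P ∪ Q) := by
    refine ⟨hRF, ?_, ?_⟩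
    · exact HasSubset.Subset.ssubset_of_ne Finset.subset_union_left
        (fun h => hdP (h ▸ Finset.mem_union_right _ hdQ))
    · intro A hA hPA
      have hAQc := hcompF A hA hPA.ne' Q hQG
      rcases hAQc with h2 | h2 | h2
      · exfalso
        have : m ∈ A ∩ Q := Finset.mem_inter.2 ⟨hPA.subset hm.1, hm.2⟩
        rw [h2] at this; exact absurd this (Finset.notMem_empty m)
      · exact absurd (hPA.subset.trans h2) hnPQ
      · exact Finset.union_subset hPA.subset h2
  refine ⟨P \ Q, P, P ∪ Q, hCF, hParentCP, hParentPR, ?_⟩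
  have hRQ : (P ∪ Q) \ (P \ Q) = Q := by
    ext t
    simp only [Finset.mem_sdiff, Finset.mem_union]
    tauto
  rw [hRQ]
  exact hGdef

theorem nni_adjacent_iff_dCM_eq_one (S : Finset α) (F G : Finset (Finset α))
    (hF : Nondeg S F) (hG : Nondeg S G) (hne : F ≠ G) :
    (IsNNIMove F G ∨ IsNNIMove G F) ↔ dCM F G = 1 := by
  constructor
  · rintro (h | h)
    · exact dCM_of_move hF.1 h
    · rw [dCM_comm]
      exact dCM_of_move hG.1 h
  · intro h
    exact Or.inl (move_of_dCM hF hG h)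

end TreeDist
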